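/- Let H be a connected graph on h ≥ 1 vertices with rooted spanning tree T (root o), let G be a graph on n ≥ 1 vertices, let D be the degree of a uniformly random vertex in G, and suppose a positive integer Δ and λ ≥ 0 satisfy E[D^{h−1} 1[D ≥ Δ]] ≤ λ. Let v*_1, …, v*_N be i.i.d. uniform vertices of G, let X̂_N := N^{−1} Σ_i X̄(v*_i), and let s > 0, p ∈ (0,1]. If N ≥ (Δ−1)^{2(h−1)} ln(2/p) / (2 s²), then with probability at least 1 − p we have X̂_N − s ≤ n^{−1} emb(H,G) ≤ X̂_N + s + i_T λ. -/

import Mathlib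

open Finset SimpleGraph
open scoped Classical


lemma exists_parent {VH : Type*} (T : SimpleGraph VH) (hc : T.Connected) (r : VH) :
    ∀ x : VH, x ≠ r → ∃ p, T.Adj p x ∧ T.dist r p + 1 = T.dist r x := by
  intro x hx
  obtain ⟨w, hw⟩ := hc.exists_walk_length_eq_dist x r
  cases w with
  | nil => exact absurd rfl hx
  | cons h q =>
    rename_i b
    refine ⟨b, h.symm, ?_⟩
    simp only [Walk.length_cons] at hw
    have h1 : T.dist r b ≤ q.length := by rw [T.dist_comm]; exact SimpleGraph.dist_le q
    have h2 : T.dist r x ≤ T.dist r b + 1 := by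
      have h3 := hc.dist_triangle (u := r) (v := b) (w := x)
      have h4 : T.dist b x = 1 := SimpleGraph.dist_eq_one_iff_adj.2 h.symm
      omega
    have h5 : T.dist r x = q.length + 1 := by rw [T.dist_comm]; omega
    omega

lemma count_tree_homs {VH VG : Type*} [Fintype VH] [Fintype VG]
    (T : SimpleGraph VH) (hc : T.Connected) (G : SimpleGraph VG)
    (r : VH) (S : VH → Prop) (hS : ∀ u, 2 ≤ T.degree u → S u) (hSr : S r)
    (w : VG) (B : ℕ)
    (A : Finset (VH → VG))
    (hP : ∀ σ ∈ A, (∀ a b, T.Adj a b → G.Adj (σ a) (σ b)) ∧ σ r = w ∧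
          ∀ u, S u → G.degree (σ u) ≤ B) :
    A.card ≤ B ^ (Fintype.card VH - 1) := by
  classical
  have hpar : ∀ x : VH, ∃ p, x ≠ r → T.Adj p x ∧ T.dist r p + 1 = T.dist r x := by
    intro x
    by_cases hx : x = r
    · exact ⟨r, fun h => absurd hx h⟩
    · obtain ⟨p, h1, h2⟩ := exists_parent T hc r x hx
      exact ⟨p, fun _ => ⟨h1, h2⟩⟩
  choose par hpar using hpar
  -- parent is in S
  have hparS : ∀ x, x ≠ r → S (par x) := by
    intro x hx
    by_cases hpr : par x = r
    · rw [hpr]; exact hSr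
    · apply hS
      obtain ⟨hadj1, hd1⟩ := hpar x hx
      obtain ⟨hadj2, hd2⟩ := hpar (par x) hpr
      have hne : x ≠ par (par x) := by
        intro he
        have hpos : 0 < T.dist r (par x) := hc.pos_dist_of_ne (Ne.symm hpr)
        rw [← he] at hd2
        omega
      rw [← SimpleGraph.card_neighborFinset_eq_degree]
      apply Finset.one_lt_card.2
      exact ⟨x, by simp [hadj1], par (par x), by simp [hadj2.symm], hne⟩
  set enc : (VH → VG) → (VH → ℕ) := fun σ x =>
    if x = r then 0 else List.idxOf (σ x) ((G.neighborFinset (σ (par x))).toList) with henc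
  have hcard : (Fintype.piFinset (fun x : VH =>
      if x = r then ({0} : Finset ℕ) else Finset.range B)).card = B ^ (Fintype.card VH - 1) := by
    rw [Fintype.card_piFinset]
    rw [← Finset.mul_prod_erase Finset.univ _ (Finset.mem_univ r)]
    simp only [if_pos rfl, Finset.card_singleton, one_mul, if_true]
    rw [Finset.prod_congr rfl (fun x hx => by
      rw [if_neg (Finset.ne_of_mem_erase hx), Finset.card_range])]
    rw [Finset.prod_const, Finset.card_erase_of_mem (Finset.mem_univ r), Finset.card_univ]
  rw [← hcard]
  apply Finset.card_le_card_of_injOn enc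
  · intro σ hσ
    obtain ⟨hhom, hroot, hdeg⟩ := hP σ hσ
    rw [Finset.mem_coe, Fintype.mem_piFinset]
    intro x
    by_cases hx : x = r
    · simp [henc, hx]
    · simp only [henc, if_neg hx, Finset.mem_range]
      have hadj := hhom _ _ (hpar x hx).1
      have hmem : σ x ∈ (G.neighborFinset (σ (par x))).toList := by
        rw [Finset.mem_toList, SimpleGraph.mem_neighborFinset]; exact hadj
      calc List.idxOf (σ x) _ < _ := List.idxOf_lt_length_iff.2 hmem
        _ = G.degree (σ (par x)) := by
            rw [Finset.length_toList, SimpleGraph.card_neighborFinset_eq_degree]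
        _ ≤ B := hdeg _ (hparS x hx)
  · intro σ₁ hσ₁ σ₂ hσ₂ he
    obtain ⟨hhom₁, hroot₁, _⟩ := hP σ₁ (by exact_mod_cast hσ₁)
    obtain ⟨hhom₂, hroot₂, _⟩ := hP σ₂ (by exact_mod_cast hσ₂)
    funext x
    have key : ∀ d, ∀ x : VH, T.dist r x = d → σ₁ x = σ₂ x := by
      intro d
      induction d using Nat.strong_induction_on with
      | _ d ih =>
        intro x hdx
        by_cases hx : x = r
        · rw [hx, hroot₁, hroot₂]
        · obtain ⟨hadj, hdist⟩ := hpar x hx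
          have hplt : T.dist r (par x) < d := by omega
          have hpeq : σ₁ (par x) = σ₂ (par x) := ih _ hplt _ rfl
          have h1 : enc σ₁ x = enc σ₂ x := congrFun he x
          simp only [henc, if_neg hx] at h1
          rw [hpeq] at h1
          have hm1 : σ₁ x ∈ (G.neighborFinset (σ₂ (par x))).toList := by
            rw [Finset.mem_toList, SimpleGraph.mem_neighborFinset, ← hpeq]
            exact hhom₁ _ _ hadj
          have hm2 : σ₂ x ∈ (G.neighborFinset (σ₂ (par x))).toList := by
            rw [Finset.mem_toList, SimpleGraph.mem_neighborFinset]
            exact hhom₂ _ _ hadj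
          exact (List.idxOf_inj hm1).1 h1
    exact key _ x rfl

lemma hoeffding_core (q : ℝ) (hq0 : 0 ≤ q) (hq1 : q ≤ 1) (u : ℝ) :
    Real.log ((1 - q) + q * Real.exp u) ≤ q * u + u ^ 2 / 8 := by
  have hF : ∀ x : ℝ, 0 < (1 - q) + q * Real.exp x := by
    intro x
    rcases eq_or_lt_of_le hq0 with h | h
    · simp [← h]
    · have := mul_pos h (Real.exp_pos x)
      nlinarith
  set F : ℝ → ℝ := fun x => (1 - q) + q * Real.exp x with hFdef
  set f' : ℝ → ℝ := fun x => q * Real.exp x / F x with hf'def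
  set φ : ℝ → ℝ := fun x => q * x + x ^ 2 / 8 - Real.log (F x) with hφdef
  set φ' : ℝ → ℝ := fun x => q + x / 4 - f' x with hφ'def
  have hd1 : ∀ x : ℝ, HasDerivAt F (q * Real.exp x) x := by
    intro x
    exact ((Real.hasDerivAt_exp x).const_mul q).const_add (1 - q)
  have hdφ : ∀ x : ℝ, HasDerivAt φ (φ' x) x := by
    intro x
    have h1 : HasDerivAt (fun y : ℝ => q * y + y ^ 2 / 8) (q + x * 2 / 8) x := by
      have := ((hasDerivAt_id' x).const_mul q).add ((hasDerivAt_pow 2 x).div_const 8)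
      refine this.congr_deriv ?_
      ring
    have h2 := ((hd1 x).log (ne_of_gt (hF x)))
    have := h1.sub h2
    refine this.congr_deriv ?_
    simp only [hφ'def, hf'def]
    ring
  have hdφ' : ∀ x : ℝ, HasDerivAt φ'
      (1 / 4 - (q * Real.exp x * F x - q * Real.exp x * (q * Real.exp x)) / F x ^ 2) x := by
    intro x
    have h1 : HasDerivAt (fun y : ℝ => q + y / 4) (1 / 4) x := by
      have := ((hasDerivAt_id' x).div_const 4).const_add q
      convert this using 1
    have h2 := ((Real.hasDerivAt_exp x).const_mul q).div (hd1 x) (ne_of_gt (hF x))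
    exact h1.sub h2
  have hφ'' : ∀ x : ℝ, 0 ≤ 1 / 4 - (q * Real.exp x * F x - q * Real.exp x * (q * Real.exp x)) / F x ^ 2 := by
    intro x
    rw [sub_nonneg, div_le_iff₀ (pow_pos (hF x) 2)]
    have he := Real.exp_pos x
    simp only [hFdef]
    nlinarith [sq_nonneg ((1 - q) - q * Real.exp x), mul_nonneg hq0 he.le,
      mul_nonneg (mul_nonneg hq0 he.le) (sub_nonneg.2 hq1)]
  have hmono : Monotone φ' := by
    apply monotone_of_deriv_nonneg
    · exact fun x => (hdφ' x).differentiableAt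
    · intro x
      rw [(hdφ' x).deriv]
      exact hφ'' x
  have hφ'0 : φ' 0 = 0 := by
    simp only [hφ'def, hf'def, hFdef, Real.exp_zero, mul_one]
    have : 1 - q + q = 1 := by ring
    rw [this]
    simp
  have hφ0 : φ 0 = 0 := by
    simp only [hφdef, hFdef, Real.exp_zero, mul_one]
    norm_num
  have key : 0 ≤ φ u := by
    rcases lt_trichotomy u 0 with hu | hu | hu
    · obtain ⟨c, hc, hceq⟩ := exists_hasDerivAt_eq_slope φ φ' hu
        (fun x _ => (hdφ x).continuousAt.continuousWithinAt) (fun x hx => hdφ x)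
      have h1 : φ' c ≤ 0 := hφ'0 ▸ hmono hc.2.le
      rw [hceq] at h1
      rw [hφ0] at h1
      have h2 : 0 < 0 - u := by linarith
      rcases div_nonpos_iff.1 h1 with ⟨h3, h4⟩ | ⟨h3, h4⟩ <;> linarith
    · rw [← hu] at hφ0; linarith [hφ0]
    · obtain ⟨c, hc, hceq⟩ := exists_hasDerivAt_eq_slope φ φ' hu
        (fun x _ => (hdφ x).continuousAt.continuousWithinAt) (fun x hx => hdφ x)
      have h1 : 0 ≤ φ' c := hφ'0 ▸ hmono hc.1.le
      rw [hceq, hφ0] at h1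
      have h2 : 0 < u - 0 := by linarith
      have := (div_nonneg_iff.1 h1)
      rcases this with ⟨h3, _⟩ | ⟨h3, h4⟩
      · linarith
      · linarith
  simp only [hφdef] at key
  linarith [key]

lemma hoeffding_mgf {VG : Type*} [Fintype VG] (n : ℕ) (hn : Fintype.card VG = n)
    (hn1 : 1 ≤ n) (Y : VG → ℝ) (b : ℝ) (hb : 0 < b)
    (hY : ∀ v, 0 ≤ Y v ∧ Y v ≤ b) (t : ℝ) :
    ∑ v, Real.exp (t * (Y v - (∑ v, Y v) / n)) ≤ n * Real.exp (t ^ 2 * b ^ 2 / 8) := by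
  have hnpos : (0 : ℝ) < n := by exact_mod_cast hn1
  set μ : ℝ := (∑ v, Y v) / n with hμ
  have hsum0 : 0 ≤ ∑ v, Y v := Finset.sum_nonneg fun v _ => (hY v).1
  have hsumb : ∑ v, Y v ≤ n * b := by
    calc ∑ v, Y v ≤ ∑ _v : VG, b := Finset.sum_le_sum fun v _ => (hY v).2
      _ = n * b := by rw [Finset.sum_const, Finset.card_univ, hn, nsmul_eq_mul]
  have hμ0 : 0 ≤ μ := div_nonneg hsum0 hnpos.le
  have hμb : μ ≤ b := by rw [hμ, div_le_iff₀ hnpos]; linarith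
  set q : ℝ := μ / b with hq
  have hq0 : 0 ≤ q := div_nonneg hμ0 hb.le
  have hq1 : q ≤ 1 := by rw [hq, div_le_one hb]; exact hμb
  have hqb : q * b = μ := by rw [hq]; field_simp
  -- pointwise convexity bound
  have hpt : ∀ v, Real.exp (t * Y v) ≤ (1 - Y v / b) + (Y v / b) * Real.exp (t * b) := by
    intro v
    have hθ0 : 0 ≤ Y v / b := div_nonneg (hY v).1 hb.le
    have hθ1 : Y v / b ≤ 1 := by rw [div_le_one hb]; exact (hY v).2
    have hc := convexOn_exp.2 (Set.mem_univ (0 : ℝ)) (Set.mem_univ (t * b))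
      (by linarith : (0:ℝ) ≤ 1 - Y v / b) hθ0 (by ring)
    simp only [smul_eq_mul, mul_zero, zero_add, Real.exp_zero, mul_one] at hc
    have harg : Y v / b * (t * b) = t * Y v := by field_simp
    rw [harg] at hc
    exact hc
  have hsum : ∑ v, Real.exp (t * Y v) ≤ n * ((1 - q) + q * Real.exp (t * b)) := by
    calc ∑ v, Real.exp (t * Y v)
        ≤ ∑ v, ((1 - Y v / b) + (Y v / b) * Real.exp (t * b)) :=
          Finset.sum_le_sum fun v _ => hpt v
      _ = (n : ℝ) - (∑ v, Y v) / b + ((∑ v, Y v) / b) * Real.exp (t * b) := by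
          rw [Finset.sum_add_distrib, Finset.sum_sub_distrib, Finset.sum_const,
            Finset.card_univ, hn, ← Finset.sum_mul, ← Finset.sum_div]
          simp [nsmul_eq_mul]
      _ = n * ((1 - q) + q * Real.exp (t * b)) := by
          have h1 : (∑ v, Y v) / b = n * q := by
            rw [hq, hμ]; field_simp
          rw [h1]; ring
  have hcore := hoeffding_core q hq0 hq1 (t * b)
  have hFpos : (0 : ℝ) < (1 - q) + q * Real.exp (t * b) := by
    rcases eq_or_lt_of_le hq0 with h | h
    · simp [← h]
    · nlinarith [mul_pos h (Real.exp_pos (t * b))]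
  have hcore2 : (1 - q) + q * Real.exp (t * b) ≤ Real.exp (q * (t * b) + (t * b) ^ 2 / 8) :=
    (Real.log_le_iff_le_exp hFpos).1 hcore
  calc ∑ v, Real.exp (t * (Y v - μ))
      = Real.exp (-(t * μ)) * ∑ v, Real.exp (t * Y v) := by
        rw [Finset.mul_sum]
        refine Finset.sum_congr rfl fun v _ => ?_
        rw [← Real.exp_add]; ring_nf
    _ ≤ Real.exp (-(t * μ)) * (n * ((1 - q) + q * Real.exp (t * b))) := by
        apply mul_le_mul_of_nonneg_left hsum (Real.exp_nonneg _)
    _ ≤ Real.exp (-(t * μ)) * (n * Real.exp (q * (t * b) + (t * b) ^ 2 / 8)) := by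
        apply mul_le_mul_of_nonneg_left _ (Real.exp_nonneg _)
        exact mul_le_mul_of_nonneg_left hcore2 hnpos.le
    _ = n * Real.exp (t ^ 2 * b ^ 2 / 8) := by
        rw [← mul_assoc, mul_comm (Real.exp _) (n : ℝ), mul_assoc, ← Real.exp_add]
        congr 2
        have : q * (t * b) = t * μ := by rw [← hqb]; ring
        rw [this]; ring

lemma chernoff_count {VG : Type*} [Fintype VG] (n : ℕ) (hn : Fintype.card VG = n)
    (hn1 : 1 ≤ n) (Y : VG → ℝ) (b : ℝ) (hb : 0 < b)
    (hY : ∀ v, 0 ≤ Y v ∧ Y v ≤ b) (s : ℝ) (hs : 0 < s) (N : ℕ) :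
    ((Finset.univ.filter (fun ω : Fin N → VG =>
        (N : ℝ) * ((∑ v, Y v) / n) + N * s ≤ ∑ i, Y (ω i))).card : ℝ)
      ≤ Real.exp (-2 * N * s ^ 2 / b ^ 2) * (n : ℝ) ^ N := by
  have hnpos : (0 : ℝ) < n := by exact_mod_cast hn1
  set μ : ℝ := (∑ v, Y v) / n with hμ
  set t : ℝ := 4 * s / b ^ 2 with ht
  have htpos : 0 < t := by positivity
  set g : VG → ℝ := fun v => Real.exp (t * (Y v - μ)) with hg
  have hgpos : ∀ v, 0 < g v := fun v => Real.exp_pos _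
  have step1 : ((Finset.univ.filter (fun ω : Fin N → VG =>
        (N : ℝ) * μ + N * s ≤ ∑ i, Y (ω i))).card : ℝ)
      ≤ ∑ ω : Fin N → VG, Real.exp (-(t * N * s)) * ∏ i, g (ω i) := by
    rw [Finset.card_eq_sum_ones]
    push_cast
    rw [← Finset.sum_filter_add_sum_filter_not Finset.univ
      (fun ω : Fin N → VG => (N : ℝ) * μ + N * s ≤ ∑ i, Y (ω i))
      (fun ω => Real.exp (-(t * N * s)) * ∏ i, g (ω i))]
    have h2 : (0:ℝ) ≤ ∑ ω ∈ Finset.univ.filter (fun ω : Fin N → VG =>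
        ¬((N : ℝ) * μ + N * s ≤ ∑ i, Y (ω i))),
        Real.exp (-(t * N * s)) * ∏ i, g (ω i) := by
      apply Finset.sum_nonneg
      intro ω _
      positivity
    have h1 : ∀ ω ∈ Finset.univ.filter (fun ω : Fin N → VG =>
        (N : ℝ) * μ + N * s ≤ ∑ i, Y (ω i)),
        (1:ℝ) ≤ Real.exp (-(t * N * s)) * ∏ i, g (ω i) := by
      intro ω hω
      rw [Finset.mem_filter] at hω
      have harg : Real.exp (-(t * N * s)) * ∏ i, g (ω i)
          = Real.exp (t * ((∑ i, Y (ω i)) - N * μ - N * s)) := by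
        simp only [hg, ← Real.exp_sum, ← Real.exp_add]
        congr 1
        rw [← Finset.mul_sum, Finset.sum_sub_distrib, Finset.sum_const, Finset.card_univ,
          Fintype.card_fin, nsmul_eq_mul]
        ring
      rw [harg]
      apply Real.one_le_exp
      have := hω.2
      nlinarith
    calc (∑ _ω ∈ Finset.univ.filter (fun ω : Fin N → VG =>
          (N : ℝ) * μ + N * s ≤ ∑ i, Y (ω i)), (1:ℝ))
        ≤ ∑ ω ∈ Finset.univ.filter (fun ω : Fin N → VG =>
          (N : ℝ) * μ + N * s ≤ ∑ i, Y (ω i)),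
          Real.exp (-(t * N * s)) * ∏ i, g (ω i) := Finset.sum_le_sum h1
      _ ≤ _ := le_add_of_nonneg_right h2
  have step3 : ∑ ω : Fin N → VG, Real.exp (-(t * N * s)) * ∏ i, g (ω i)
      = Real.exp (-(t * N * s)) * (∑ v, g v) ^ N := by
    rw [← Finset.mul_sum]
    congr 1
    have := Finset.prod_univ_sum (fun _ : Fin N => (Finset.univ : Finset VG))
      (fun _ v => g v)
    rw [Fintype.piFinset_univ] at this
    rw [← this, Finset.prod_const, Finset.card_univ, Fintype.card_fin]
  have step4 : (∑ v, g v) ^ N ≤ ((n : ℝ) * Real.exp (t ^ 2 * b ^ 2 / 8)) ^ N := by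
    apply pow_le_pow_left₀ (Finset.sum_nonneg fun v _ => (hgpos v).le)
    exact hoeffding_mgf n hn hn1 Y b hb hY t
  have step5 : Real.exp (-(t * N * s)) * ((n : ℝ) * Real.exp (t ^ 2 * b ^ 2 / 8)) ^ N
      = Real.exp (-2 * N * s ^ 2 / b ^ 2) * (n : ℝ) ^ N := by
    rw [mul_pow, ← Real.exp_nat_mul, ← mul_assoc, mul_comm (Real.exp _) ((n:ℝ)^N),
      mul_assoc, ← Real.exp_add, mul_comm]
    congr 2
    rw [ht]
    field_simp
    ring
  calc ((Finset.univ.filter (fun ω : Fin N → VG =>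
        (N : ℝ) * μ + N * s ≤ ∑ i, Y (ω i))).card : ℝ)
      ≤ ∑ ω : Fin N → VG, Real.exp (-(t * N * s)) * ∏ i, g (ω i) := step1
    _ = Real.exp (-(t * N * s)) * (∑ v, g v) ^ N := step3
    _ ≤ Real.exp (-(t * N * s)) * ((n : ℝ) * Real.exp (t ^ 2 * b ^ 2 / 8)) ^ N :=
        mul_le_mul_of_nonneg_left step4 (Real.exp_nonneg _)
    _ = Real.exp (-2 * N * s ^ 2 / b ^ 2) * (n : ℝ) ^ N := step5

section Main
variable {VH VG : Type*} [Fintype VH] [Fintype VG]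

lemma sandwich_upper
    (H : SimpleGraph VH) (G : SimpleGraph VG) (o : VH)
    (h : ℕ) (hcard : Fintype.card VH = h)
    (T : SimpleGraph VH) (hTle : T ≤ H) (hTtree : T.IsTree)
    (Δ : ℕ)
    (Xbar : VG → ℕ)
    (hXbar : ∀ v : VG, Xbar v =
      (Finset.univ.filter
        (fun σ : VH → VG =>
          (∀ a b, H.Adj a b → G.Adj (σ a) (σ b)) ∧ Function.Injective σ ∧
          σ o = v ∧
          ∀ u : VH, (1 < T.degree u ∨ u = o) → G.degree (σ u) < Δ)).card)
    (iT : ℕ)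
    (hiT : iT = (Finset.univ.filter (fun u : VH => 1 < T.degree u ∨ u = o)).card)
    (emb : ℕ)
    (hemb : emb = (Finset.univ.filter
      (fun σ : VH → VG =>
        (∀ a b, H.Adj a b → G.Adj (σ a) (σ b)) ∧ Function.Injective σ)).card) :
    (∑ v : VG, Xbar v) ≤ emb ∧
    emb ≤ (∑ v : VG, Xbar v) + iT *
      ∑ w ∈ Finset.univ.filter (fun w : VG => Δ ≤ G.degree w), (G.degree w) ^ (h - 1) := by
  classical
  set Q : (VH → VG) → Prop := fun σ =>
    (∀ a b, H.Adj a b → G.Adj (σ a) (σ b)) ∧ Function.Injective σ with hQ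
  set R : (VH → VG) → Prop := fun σ =>
    ∀ u : VH, (1 < T.degree u ∨ u = o) → G.degree (σ u) < Δ with hR
  set Good : Finset (VH → VG) := Finset.univ.filter (fun σ => Q σ ∧ R σ) with hGood
  -- ∑ Xbar = card Good
  have hsumX : (∑ v : VG, Xbar v) = Good.card := by
    rw [Finset.card_eq_sum_card_fiberwise
      (f := fun σ : VH → VG => σ o) (t := Finset.univ) (fun x _ => Finset.mem_univ _)]
    refine (Finset.sum_congr rfl fun v _ => ?_).symm
    rw [hXbar v, hGood, Finset.filter_filter]
    congr 1
    ext σ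
    simp only [Finset.mem_filter]
    tauto
  have hGoodsub : Good ⊆ Finset.univ.filter Q := by
    intro σ hσ
    rw [hGood, Finset.mem_filter] at hσ
    rw [Finset.mem_filter]
    exact ⟨hσ.1, hσ.2.1⟩
  constructor
  · rw [hsumX, hemb]; exact Finset.card_le_card hGoodsub
  -- upper bound
  set Bad : Finset (VH → VG) := (Finset.univ.filter Q).filter (fun σ => ¬ R σ) with hBad
  have hsplit : emb = Good.card + Bad.card := by
    rw [hemb, hBad, ← Finset.card_filter_add_card_filter_not
      (s := Finset.univ.filter Q) (p := R)]
    congr 1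
    rw [hGood, Finset.filter_filter]
  set I : Finset VH := Finset.univ.filter (fun u : VH => 1 < T.degree u ∨ u = o) with hI
  set BadU : VH → Finset (VH → VG) := fun u => Finset.univ.filter
    (fun σ : VH → VG => (∀ a b, T.Adj a b → G.Adj (σ a) (σ b)) ∧
      Δ ≤ G.degree (σ u) ∧
      ∀ u' : VH, (1 < T.degree u' ∨ u' = o) → G.degree (σ u') ≤ G.degree (σ u)) with hBadU
  have hbadsub : Bad ⊆ I.biUnion BadU := by
    intro σ hσ
    rw [hBad, Finset.mem_filter, Finset.mem_filter] at hσ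
    obtain ⟨⟨-, hQσ⟩, hnR⟩ := hσ
    rw [hR] at hnR
    simp only [not_forall, Classical.not_imp, not_lt] at hnR
    obtain ⟨u0, hu0int, hu0deg⟩ := hnR
    have hInonempty : I.Nonempty := ⟨u0, by rw [hI, Finset.mem_filter]; exact ⟨Finset.mem_univ _, hu0int⟩⟩
    obtain ⟨u, huI, humax⟩ := Finset.exists_max_image I (fun u => G.degree (σ u)) hInonempty
    rw [Finset.mem_biUnion]
    refine ⟨u, huI, ?_⟩
    rw [hBadU, Finset.mem_filter]
    refine ⟨Finset.mem_univ _, fun a b hab => hQσ.1 a b (hTle hab), ?_, ?_⟩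
    · calc Δ ≤ G.degree (σ u0) := hu0deg
        _ ≤ G.degree (σ u) := humax u0 (by rw [hI, Finset.mem_filter]; exact ⟨Finset.mem_univ _, hu0int⟩)
    · intro u' hu'
      exact humax u' (by rw [hI, Finset.mem_filter]; exact ⟨Finset.mem_univ _, hu'⟩)
  have hBadUcard : ∀ u ∈ I, (BadU u).card ≤
      ∑ w ∈ Finset.univ.filter (fun w : VG => Δ ≤ G.degree w), (G.degree w) ^ (h - 1) := by
    intro u huI
    rw [hI, Finset.mem_filter] at huI
    have hfib : (BadU u).card = ∑ w ∈ Finset.univ.filter (fun w : VG => Δ ≤ G.degree w),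
        ((BadU u).filter (fun σ => σ u = w)).card := by
      apply Finset.card_eq_sum_card_fiberwise
      intro σ hσ
      rw [Finset.mem_coe, hBadU, Finset.mem_filter] at hσ
      rw [Finset.mem_coe, Finset.mem_filter]
      exact ⟨Finset.mem_univ _, hσ.2.2.1⟩
    rw [hfib]
    apply Finset.sum_le_sum
    intro w hw
    rw [Finset.mem_filter] at hw
    have := count_tree_homs T hTtree.isConnected G u
      (S := fun u' : VH => (1 < T.degree u' ∨ u' = o) ∨ u' = u)
      (fun u' hdeg => Or.inl (Or.inl hdeg))
      (Or.inr rfl) w (G.degree w)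
      ((BadU u).filter (fun σ => σ u = w))
      (by
        intro σ hσ
        rw [Finset.mem_filter, hBadU, Finset.mem_filter] at hσ
        obtain ⟨⟨-, hhom, hdeg, hall⟩, hroot⟩ := hσ
        refine ⟨hhom, hroot, ?_⟩
        rintro u' (hint | rfl)
        · rw [← hroot]; exact hall u' hint
        · rw [hroot])
    rw [hcard] at this
    exact this
  have hBadcard : Bad.card ≤ iT *
      ∑ w ∈ Finset.univ.filter (fun w : VG => Δ ≤ G.degree w), (G.degree w) ^ (h - 1) := by
    calc Bad.card ≤ (I.biUnion BadU).card := Finset.card_le_card hbadsub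
      _ ≤ ∑ u ∈ I, (BadU u).card := Finset.card_biUnion_le
      _ ≤ ∑ _u ∈ I, ∑ w ∈ Finset.univ.filter (fun w : VG => Δ ≤ G.degree w),
            (G.degree w) ^ (h - 1) := Finset.sum_le_sum hBadUcard
      _ = iT * _ := by rw [Finset.sum_const, hiT, hI, smul_eq_mul]
  rw [hsplit, hsumX]
  exact Nat.add_le_add_left hBadcard _

end Main

set_option maxHeartbeats 1000000 in
/-- Sampling theorem (Theorem 1.3 of the paper): sampling `N` i.i.d. uniform vertices
`v*_1, …, v*_N` of `G` (modelled by the uniform distribution on `Fin N → V(G)`, so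
probabilities are counting fractions with denominator `n^N`), if
`E[D^(h-1) 1[D ≥ Δ]] ≤ λ` and `N ≥ (Δ-1)^(2(h-1)) ln(2/p) / (2s²)`, then with
probability at least `1 - p` we have
`X̂_N - s ≤ emb(H,G)/n ≤ X̂_N + s + i_T λ`. -/
theorem sampling_hoeffding
    {VH VG : Type*} [Fintype VH] [Fintype VG]
    (H : SimpleGraph VH) (G : SimpleGraph VG) (o : VH)
    (h n : ℕ) (hh : 1 ≤ h) (hcard : Fintype.card VH = h)
    (hn : Fintype.card VG = n) (hn1 : 1 ≤ n) (hconn : H.Connected)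
    (T : SimpleGraph VH) (hTle : T ≤ H) (hTtree : T.IsTree)
    (Δ : ℕ) (hΔ : 0 < Δ) (lam : ℝ) (hlam : 0 ≤ lam)
    (hexp : (∑ v : VG, if Δ ≤ G.degree v then (G.degree v : ℝ) ^ (h - 1) else 0) / n
              ≤ lam)
    (Xbar : VG → ℕ)
    (hXbar : ∀ v : VG, Xbar v =
      (Finset.univ.filter
        (fun σ : VH → VG =>
          (∀ a b, H.Adj a b → G.Adj (σ a) (σ b)) ∧ Function.Injective σ ∧
          σ o = v ∧
          ∀ u : VH, (1 < T.degree u ∨ u = o) → G.degree (σ u) < Δ)).card)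
    (iT : ℕ)
    (hiT : iT = (Finset.univ.filter (fun u : VH => 1 < T.degree u ∨ u = o)).card)
    (emb : ℕ)
    (hemb : emb = (Finset.univ.filter
      (fun σ : VH → VG =>
        (∀ a b, H.Adj a b → G.Adj (σ a) (σ b)) ∧ Function.Injective σ)).card)
    (s p : ℝ) (hs : 0 < s) (hp0 : 0 < p) (hp1 : p ≤ 1)
    (N : ℕ)
    (hN : ((Δ - 1 : ℕ) : ℝ) ^ (2 * (h - 1)) * Real.log (2 / p) / (2 * s ^ 2)
            ≤ (N : ℝ)) :
    (1 - p) * (n : ℝ) ^ N ≤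
      ((Finset.univ.filter
        (fun ω : Fin N → VG =>
          (∑ i : Fin N, (Xbar (ω i) : ℝ)) / N - s ≤ (emb : ℝ) / n ∧
          (emb : ℝ) / n ≤ (∑ i : Fin N, (Xbar (ω i) : ℝ)) / N + s + iT * lam)).card
        : ℝ) := by
  classical
  have hnpos : (0 : ℝ) < n := by exact_mod_cast hn1
  -- Xbar is bounded by (Δ-1)^(h-1)
  have hXb : ∀ v : VG, Xbar v ≤ (Δ - 1) ^ (h - 1) := by
    intro v
    rw [hXbar v, ← hcard]
    apply count_tree_homs T hTtree.isConnected G o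
      (S := fun u : VH => 1 < T.degree u ∨ u = o)
      (fun u hdeg => Or.inl hdeg) (Or.inr rfl) v (Δ - 1)
    intro σ hσ
    rw [Finset.mem_filter] at hσ
    obtain ⟨-, hhom, -, hroot, hdeg⟩ := hσ
    exact ⟨fun a b hab => hhom a b (hTle hab), hroot,
      fun u hu => Nat.le_sub_one_of_lt (hdeg u hu)⟩
  -- sandwich
  obtain ⟨hlow, hup⟩ := sandwich_upper H G o h hcard T hTle hTtree Δ Xbar hXbar iT hiT emb hemb
  set Y : VG → ℝ := fun v => (Xbar v : ℝ) with hYdef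
  set μ : ℝ := (∑ v, Y v) / n with hμdef
  set b : ℝ := ((Δ - 1 : ℕ) : ℝ) ^ (h - 1) with hbdef
  have hY : ∀ v, 0 ≤ Y v ∧ Y v ≤ b := by
    intro v
    refine ⟨Nat.cast_nonneg _, ?_⟩
    have h5 : (Xbar v : ℝ) ≤ (((Δ - 1) ^ (h - 1) : ℕ) : ℝ) := by exact_mod_cast hXb v
    rw [hbdef, ← Nat.cast_pow]
    exact h5
  set Ebig : ℕ := ∑ w ∈ Finset.univ.filter (fun w : VG => Δ ≤ G.degree w),
    (G.degree w) ^ (h - 1) with hEbigdef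
  have hsumY : (∑ v, Y v) = ((∑ v, Xbar v : ℕ) : ℝ) := by
    rw [hYdef, Nat.cast_sum]
  have hμ1 : μ ≤ (emb : ℝ) / n := by
    rw [hμdef, hsumY]
    gcongr

  have hEbigle : ((Ebig : ℕ) : ℝ) / n ≤ lam := by
    refine le_trans (le_of_eq ?_) hexp
    congr 1
    rw [hEbigdef, Nat.cast_sum, Finset.sum_filter]
    exact Finset.sum_congr rfl fun w _ => by split <;> simp
  have hμ2 : (emb : ℝ) / n ≤ μ + iT * lam := by
    have h1 : (emb : ℝ) ≤ (∑ v, Y v) + iT * Ebig := by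
      rw [hsumY, ← Nat.cast_mul, ← Nat.cast_add]
      exact_mod_cast hup
    calc (emb : ℝ) / n ≤ ((∑ v, Y v) + iT * Ebig) / n := by gcongr
      _ = μ + iT * ((Ebig : ℝ) / n) := by rw [hμdef]; ring
      _ ≤ μ + iT * lam := by
          have := mul_le_mul_of_nonneg_left hEbigle (by positivity : (0:ℝ) ≤ (iT:ℝ))
          linarith
  -- good event
  set Egood : Finset (Fin N → VG) := Finset.univ.filter
    (fun ω : Fin N → VG => |(∑ i, Y (ω i)) / N - μ| ≤ s) with hEgooddef
  have hsub : Egood ⊆ Finset.univ.filter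
      (fun ω : Fin N → VG =>
        (∑ i : Fin N, (Xbar (ω i) : ℝ)) / N - s ≤ (emb : ℝ) / n ∧
        (emb : ℝ) / n ≤ (∑ i : Fin N, (Xbar (ω i) : ℝ)) / N + s + iT * lam) := by
    intro ω hω
    rw [hEgooddef, Finset.mem_filter, abs_le] at hω
    obtain ⟨-, hab1, hab2⟩ := hω
    rw [Finset.mem_filter]
    have heqs : (∑ i : Fin N, (Xbar (ω i) : ℝ)) = ∑ i, Y (ω i) := rfl
    refine ⟨Finset.mem_univ _, ?_, ?_⟩
    · rw [heqs]; linarith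
    · rw [heqs]; linarith
  refine le_trans ?_ (Nat.cast_le.2 (Finset.card_le_card hsub))
  have hcardfun : Fintype.card (Fin N → VG) = n ^ N := by
    rw [Fintype.card_pi]
    simp [hn]
  have hb0 : (0 : ℝ) ≤ b := by rw [hbdef]; positivity
  have hpow0 : (0 : ℝ) ≤ (n : ℝ) ^ N := by positivity
  rcases hb0.eq_or_lt with hb | hb
  · -- degenerate case b = 0
    have hY0 : ∀ v, Y v = 0 := fun v => le_antisymm (hb ▸ (hY v).2) (hY v).1
    have hμ0 : μ = 0 := by rw [hμdef]; simp [hY0]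
    have hEgood : Egood = Finset.univ := by
      apply Finset.eq_univ_of_forall
      intro ω
      rw [hEgooddef, Finset.mem_filter]
      refine ⟨Finset.mem_univ _, ?_⟩
      simp [hY0, hμ0, hs.le]
    rw [hEgood, Finset.card_univ, hcardfun]
    push_cast
    nlinarith [hp0, hpow0]
  · -- main case
    have hb2 : ((Δ - 1 : ℕ) : ℝ) ^ (2 * (h - 1)) = b ^ 2 := by
      rw [hbdef, ← pow_mul, Nat.mul_comm]
    have hlog2p : 0 < Real.log (2 / p) := by
      apply Real.log_pos
      rw [lt_div_iff₀ hp0]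
      linarith
    have hNpos : (0 : ℝ) < N := by
      have : (0:ℝ) < ((Δ - 1 : ℕ) : ℝ) ^ (2 * (h - 1)) * Real.log (2 / p) / (2 * s ^ 2) := by
        rw [hb2]
        positivity
      linarith
    -- upper tail
    have h1 := chernoff_count n hn hn1 Y b hb hY s hs N
    -- lower tail via b - Y
    set Y' : VG → ℝ := fun v => b - Y v with hY'def
    have hY' : ∀ v, 0 ≤ Y' v ∧ Y' v ≤ b := fun v => ⟨by simp [hY'def, (hY v).2], by
      simp only [hY'def]; linarith [(hY v).1]⟩
    have h2 := chernoff_count n hn hn1 Y' b hb hY' s hs N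
    have hsumY' : (∑ v, Y' v) = n * b - ∑ v, Y v := by
      rw [hY'def, Finset.sum_sub_distrib, Finset.sum_const, Finset.card_univ, hn, nsmul_eq_mul]
    have hsub2 : Finset.univ.filter
        (fun ω : Fin N → VG => ∑ i, Y (ω i) ≤ (N : ℝ) * μ - N * s)
        ⊆ Finset.univ.filter (fun ω : Fin N → VG =>
          (N : ℝ) * ((∑ v, Y' v) / n) + N * s ≤ ∑ i, Y' (ω i)) := by
      intro ω hω
      rw [Finset.mem_filter] at hω ⊢
      refine ⟨Finset.mem_univ _, ?_⟩
      have hsi : (∑ i, Y' (ω i)) = (N : ℝ) * b - ∑ i, Y (ω i) := by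
        rw [hY'def, Finset.sum_sub_distrib, Finset.sum_const, Finset.card_univ,
          Fintype.card_fin, nsmul_eq_mul]
      have hdiv : (∑ v, Y' v) / n = b - μ := by
        rw [hsumY', hμdef]
        field_simp
      rw [hsi, hdiv]
      have := hω.2
      rw [hμdef] at this ⊢
      linarith
    have h2' : ((Finset.univ.filter
        (fun ω : Fin N → VG => ∑ i, Y (ω i) ≤ (N : ℝ) * μ - N * s)).card : ℝ)
        ≤ Real.exp (-2 * N * s ^ 2 / b ^ 2) * (n : ℝ) ^ N := by
      refine le_trans ?_ h2
      exact Nat.cast_le.2 (Finset.card_le_card hsub2)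
    have h1' : ((Finset.univ.filter
        (fun ω : Fin N → VG => (N : ℝ) * μ + N * s ≤ ∑ i, Y (ω i))).card : ℝ)
        ≤ Real.exp (-2 * N * s ^ 2 / b ^ 2) * (n : ℝ) ^ N := by
      refine le_trans (le_of_eq ?_) h1
      congr 2
    -- complement inclusion
    set EbadU : Finset (Fin N → VG) := Finset.univ.filter
      (fun ω : Fin N → VG => (N : ℝ) * μ + N * s ≤ ∑ i, Y (ω i)) with hEbadU
    set EbadL : Finset (Fin N → VG) := Finset.univ.filter
      (fun ω : Fin N → VG => ∑ i, Y (ω i) ≤ (N : ℝ) * μ - N * s) with hEbadL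
    set Ecomp : Finset (Fin N → VG) := Finset.univ.filter
      (fun ω : Fin N → VG => ¬ (|(∑ i, Y (ω i)) / N - μ| ≤ s)) with hEcomp
    have hcompsub : Ecomp ⊆ EbadU ∪ EbadL := by
      rw [hEcomp, hEbadU, hEbadL]
      intro ω hω
      rw [Finset.mem_filter, not_le] at hω
      rw [Finset.mem_union, Finset.mem_filter, Finset.mem_filter]
      rcases lt_abs.1 hω.2 with hgt | hgt
      · left
        refine ⟨Finset.mem_univ _, ?_⟩
        have h3 : μ + s < (∑ i, Y (ω i)) / N := by linarith
        rw [lt_div_iff₀ hNpos] at h3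
        linarith
      · right
        refine ⟨Finset.mem_univ _, ?_⟩
        have h3 : (∑ i, Y (ω i)) / N < μ - s := by linarith
        rw [div_lt_iff₀ hNpos] at h3
        linarith
    -- split cardinality
    have hsplitcard : Egood.card + Ecomp.card = n ^ N := by
      rw [hEcomp, hEgooddef, Finset.card_filter_add_card_filter_not,
        Finset.card_univ, hcardfun]
    have hcompcard : (Ecomp.card : ℝ)
        ≤ 2 * Real.exp (-2 * N * s ^ 2 / b ^ 2) * (n : ℝ) ^ N := by
      have hcc : ((Ecomp.card : ℕ) : ℝ) ≤ ((EbadU.card + EbadL.card : ℕ) : ℝ) :=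
        Nat.cast_le.2 ((Finset.card_le_card hcompsub).trans (Finset.card_union_le _ _))
      rw [Nat.cast_add] at hcc
      linarith
    -- numeric bound
    have hexpb : Real.exp (-2 * N * s ^ 2 / b ^ 2) ≤ p / 2 := by
      rw [show p / 2 = Real.exp (Real.log (p / 2)) from (Real.exp_log (by positivity)).symm]
      apply Real.exp_le_exp.2
      have hlogeq : Real.log (p / 2) = - Real.log (2 / p) := by
        rw [← Real.log_inv, inv_div]
      rw [hlogeq]
      have hNgeq : ((Δ - 1 : ℕ) : ℝ) ^ (2 * (h - 1)) * Real.log (2 / p) ≤ N * (2 * s ^ 2) := by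
        rw [← div_le_iff₀ (by positivity)]
        exact hN
      rw [hb2] at hNgeq
      rw [div_le_iff₀ (by positivity : (0:ℝ) < b ^ 2)]
      nlinarith
    -- finish
    have hEgoodcard : ((n : ℝ) ^ N) - (Ecomp.card : ℝ) = (Egood.card : ℝ) := by
      have h4 : ((Egood.card + Ecomp.card : ℕ) : ℝ) = ((n ^ N : ℕ) : ℝ) := by
        rw [hsplitcard]
      push_cast at h4
      linarith
    have hfin : 2 * Real.exp (-2 * N * s ^ 2 / b ^ 2) * (n : ℝ) ^ N ≤ p * (n : ℝ) ^ N := by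
      apply mul_le_mul_of_nonneg_right _ hpow0
      linarith
    linarith
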